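/- For every finite player set N with |N| > 1, there exists an interval game (N,w) that is selection superadditive but is not a superadditive interval game; in particular, the game defined by w(S) = [2|S| − 2, 2|S| − 1] for every nonempty S ⊆ N and w(∅) = [0,0] is selection superadditive while its length game |w| is not superadditive. -/

import Mathlib

/-- `v` is a selection of the interval game with lower bounds `wl` and upper bounds `wu`. -/
def IsSelection {n : ℕ} (wl wu v : Finset (Fin n) → ℝ) : Prop :=
  ∀ S : Finset (Fin n), wl S ≤ v S ∧ v S ≤ wu S

/-- A classical cooperative game is superadditive. -/
def SuperadditiveGame {n : ℕ} (v : Finset (Fin n) → ℝ) : Prop :=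
  ∀ S T : Finset (Fin n), Disjoint S T → v S + v T ≤ v (S ∪ T)

/-- A superadditive interval game: `w(S) + w(T) ⪯ w(S ∪ T)` for disjoint `S`, `T`,
and the length game is superadditive. -/
def SuperadditiveIntervalGame {n : ℕ} (wl wu : Finset (Fin n) → ℝ) : Prop :=
  (∀ S T : Finset (Fin n), Disjoint S T →
    wl S + wl T ≤ wl (S ∪ T) ∧ wu S + wu T ≤ wu (S ∪ T)) ∧
  SuperadditiveGame (fun S => wu S - wl S)

/-- Lower bound of the game `w(S) = [2|S| − 2, 2|S| − 1]` for nonempty `S`, `w(∅) = [0,0]`. -/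
noncomputable def wl5 {n : ℕ} (S : Finset (Fin n)) : ℝ :=
  if S = ∅ then 0 else 2 * (S.card : ℝ) - 2

/-- Upper bound of the game `w(S) = [2|S| − 2, 2|S| − 1]` for nonempty `S`, `w(∅) = [0,0]`. -/
noncomputable def wu5 {n : ℕ} (S : Finset (Fin n)) : ℝ :=
  if S = ∅ then 0 else 2 * (S.card : ℝ) - 1

/-- For `|N| > 1`, the game `w(S) = [2|S| − 2, 2|S| − 1]` (for nonempty `S`) is selection
superadditive, its length game is not superadditive, and it is not a superadditive
interval game. -/
theorem selection_superadditive_not_interval_superadditive {n : ℕ} (hn : 1 < n) :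
    (∀ v : Finset (Fin n) → ℝ, IsSelection wl5 wu5 v → SuperadditiveGame v) ∧
    ¬ SuperadditiveGame (fun S : Finset (Fin n) => wu5 S - wl5 S) ∧
    ¬ SuperadditiveIntervalGame (wl5 (n := n)) wu5 := by
  have hlen : ¬ SuperadditiveGame (fun S : Finset (Fin n) => wu5 S - wl5 S) := by
    intro h
    set a : Fin n := ⟨0, by omega⟩
    set b : Fin n := ⟨1, hn⟩
    have h0 : a ≠ b := by simp [a, b, Fin.ext_iff]
    have hd : Disjoint ({a} : Finset (Fin n)) {b} := by
      simp [Finset.disjoint_singleton_left]; exact fun e => h0 e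
    have := h {a} {b} hd
    have hcard : (({a} ∪ {b}) : Finset (Fin n)).card = 2 := by
      rw [Finset.card_union_of_disjoint hd]; simp
    simp only [wu5, wl5] at this
    rw [if_neg (by simp), if_neg (by simp), if_neg (by simp), if_neg (by simp),
      if_neg (by intro he; simpa [he] using hcard),
      if_neg (by intro he; simpa [he] using hcard)] at this
    rw [hcard] at this
    norm_num at this
  refine ⟨?_, hlen, fun hs => hlen hs.2⟩
  intro v hv S T hST
  have hempty : v (∅ : Finset (Fin n)) = 0 := by
    have := hv ∅
    simp [wl5, wu5] at this
    linarith [this.1, this.2]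
  rcases eq_or_ne S ∅ with rfl | hS
  · simp [hempty]
  rcases eq_or_ne T ∅ with rfl | hT
  · simp [hempty]
  have hU : S ∪ T ≠ ∅ := by
    intro h; exact hS (Finset.union_eq_empty.mp h).1
  have hvS := (hv S).2
  have hvT := (hv T).2
  have hvU := (hv (S ∪ T)).1
  simp only [wu5, wl5, if_neg hS, if_neg hT, if_neg hU] at hvS hvT hvU
  have hc : ((S ∪ T).card : ℝ) = S.card + T.card := by
    rw [Finset.card_union_of_disjoint hST]; push_cast; ring
  rw [hc] at hvU
  linarith
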